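/- Let θ be an irrational real number with −1/6 < θ < 0. Then the family of six Beatty sequences S(1/(1+θ), 0), S(1/(1+6θ), 0), S(−1/(2θ), 0), S(−1/(3θ), 0), S(−1/θ, 1/(6θ)), S(−1/θ, 5/(6θ)) is a 2-EEC. -/

import Mathlib

/-- The number of positive integers `n` with `⌊n·α + β⌋ = N`, i.e. the multiplicity
of `N` in the Beatty sequence `S(α,β)`. -/
noncomputable def beattyCount (α β : ℝ) (N : ℤ) : ℕ :=
  Nat.card {n : ℕ // 0 < n ∧ ⌊(n : ℝ) * α + β⌋ = N}

private lemma ceil_eq_floor_add_one' {x : ℝ} (hx : Irrational x) : ⌈x⌉ = ⌊x⌋ + 1 := by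
  have h1 : ⌈x⌉ ≤ ⌊x⌋ + 1 := Int.ceil_le_floor_add_one x
  have h2 : ⌊x⌋ ≤ ⌈x⌉ := Int.floor_le_ceil x
  have h3 : ⌈x⌉ ≠ ⌊x⌋ := by
    intro h
    have hf : (⌊x⌋ : ℝ) ≤ x := Int.floor_le x
    have hc : x ≤ (⌈x⌉ : ℝ) := Int.le_ceil x
    rw [h] at hc
    exact hx.ne_int ⌊x⌋ (le_antisymm hc hf)
  omega

private lemma div_one_div' (a b : ℝ) : a / (1 / b) = a * b := by
  field_simp

private lemma flr {r : ℝ} {z : ℤ} (hl : (z : ℝ) ≤ r) (hr : r < z + 1) : ⌊r⌋ = z :=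
  Int.floor_eq_iff.mpr ⟨hl, hr⟩

private lemma core {e : ℝ} (he : Irrational e) (h0 : 0 < e) (h1 : e < 1) :
    ⌊6 * e⌋ + ⌊-(2 * e)⌋ + ⌊-(3 * e)⌋ + ⌊-e + 1 / 6⌋ + ⌊-e + 5 / 6⌋ = -2 := by
  have hne : ∀ q : ℚ, e ≠ (q : ℝ) := fun q h => he ⟨q, h.symm⟩
  have h16 : e ≠ 1 / 6 := by simpa using hne (1 / 6)
  have h13 : e ≠ 1 / 3 := by simpa using hne (1 / 3)
  have h12 : e ≠ 1 / 2 := by simpa using hne (1 / 2)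
  have h23 : e ≠ 2 / 3 := by simpa using hne (2 / 3)
  have h56 : e ≠ 5 / 6 := by simpa using hne (5 / 6)
  rcases lt_or_gt_of_ne h16 with hc1 | hc1
  · have e1 : ⌊6 * e⌋ = (0 : ℤ) := flr (by push_cast; linarith) (by push_cast; linarith)
    have e2 : ⌊-(2 * e)⌋ = (-1 : ℤ) := flr (by push_cast; linarith) (by push_cast; linarith)
    have e3 : ⌊-(3 * e)⌋ = (-1 : ℤ) := flr (by push_cast; linarith) (by push_cast; linarith)
    have e4 : ⌊-e + 1 / 6⌋ = (0 : ℤ) := flr (by push_cast; linarith) (by push_cast; linarith)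
    have e5 : ⌊-e + 5 / 6⌋ = (0 : ℤ) := flr (by push_cast; linarith) (by push_cast; linarith)
    omega
  rcases lt_or_gt_of_ne h13 with hc2 | hc2
  · have e1 : ⌊6 * e⌋ = (1 : ℤ) := flr (by push_cast; linarith) (by push_cast; linarith)
    have e2 : ⌊-(2 * e)⌋ = (-1 : ℤ) := flr (by push_cast; linarith) (by push_cast; linarith)
    have e3 : ⌊-(3 * e)⌋ = (-1 : ℤ) := flr (by push_cast; linarith) (by push_cast; linarith)
    have e4 : ⌊-e + 1 / 6⌋ = (-1 : ℤ) := flr (by push_cast; linarith) (by push_cast; linarith)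
    have e5 : ⌊-e + 5 / 6⌋ = (0 : ℤ) := flr (by push_cast; linarith) (by push_cast; linarith)
    omega
  rcases lt_or_gt_of_ne h12 with hc3 | hc3
  · have e1 : ⌊6 * e⌋ = (2 : ℤ) := flr (by push_cast; linarith) (by push_cast; linarith)
    have e2 : ⌊-(2 * e)⌋ = (-1 : ℤ) := flr (by push_cast; linarith) (by push_cast; linarith)
    have e3 : ⌊-(3 * e)⌋ = (-2 : ℤ) := flr (by push_cast; linarith) (by push_cast; linarith)
    have e4 : ⌊-e + 1 / 6⌋ = (-1 : ℤ) := flr (by push_cast; linarith) (by push_cast; linarith)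
    have e5 : ⌊-e + 5 / 6⌋ = (0 : ℤ) := flr (by push_cast; linarith) (by push_cast; linarith)
    omega
  rcases lt_or_gt_of_ne h23 with hc4 | hc4
  · have e1 : ⌊6 * e⌋ = (3 : ℤ) := flr (by push_cast; linarith) (by push_cast; linarith)
    have e2 : ⌊-(2 * e)⌋ = (-2 : ℤ) := flr (by push_cast; linarith) (by push_cast; linarith)
    have e3 : ⌊-(3 * e)⌋ = (-2 : ℤ) := flr (by push_cast; linarith) (by push_cast; linarith)
    have e4 : ⌊-e + 1 / 6⌋ = (-1 : ℤ) := flr (by push_cast; linarith) (by push_cast; linarith)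
    have e5 : ⌊-e + 5 / 6⌋ = (0 : ℤ) := flr (by push_cast; linarith) (by push_cast; linarith)
    omega
  rcases lt_or_gt_of_ne h56 with hc5 | hc5
  · have e1 : ⌊6 * e⌋ = (4 : ℤ) := flr (by push_cast; linarith) (by push_cast; linarith)
    have e2 : ⌊-(2 * e)⌋ = (-2 : ℤ) := flr (by push_cast; linarith) (by push_cast; linarith)
    have e3 : ⌊-(3 * e)⌋ = (-3 : ℤ) := flr (by push_cast; linarith) (by push_cast; linarith)
    have e4 : ⌊-e + 1 / 6⌋ = (-1 : ℤ) := flr (by push_cast; linarith) (by push_cast; linarith)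
    have e5 : ⌊-e + 5 / 6⌋ = (0 : ℤ) := flr (by push_cast; linarith) (by push_cast; linarith)
    omega
  · have e1 : ⌊6 * e⌋ = (5 : ℤ) := flr (by push_cast; linarith) (by push_cast; linarith)
    have e2 : ⌊-(2 * e)⌋ = (-2 : ℤ) := flr (by push_cast; linarith) (by push_cast; linarith)
    have e3 : ⌊-(3 * e)⌋ = (-3 : ℤ) := flr (by push_cast; linarith) (by push_cast; linarith)
    have e4 : ⌊-e + 1 / 6⌋ = (-1 : ℤ) := flr (by push_cast; linarith) (by push_cast; linarith)
    have e5 : ⌊-e + 5 / 6⌋ = (-1 : ℤ) := flr (by push_cast; linarith) (by push_cast; linarith)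
    omega

private lemma floor_id {x : ℝ} (hx : Irrational x) :
    ⌊x⌋ + ⌊6 * x⌋ + ⌊-(2 * x)⌋ + ⌊-(3 * x)⌋ + ⌊-x + 1 / 6⌋ + ⌊-x + 5 / 6⌋ = -2 := by
  have he : Irrational (Int.fract x) := by
    rw [Int.fract]
    exact hx.sub_intCast ⌊x⌋
  have h0 : 0 < Int.fract x :=
    lt_of_le_of_ne (Int.fract_nonneg x) (by simpa [eq_comm] using he.ne_int 0)
  have h1 : Int.fract x < 1 := Int.fract_lt_one x
  have hfr : Int.fract x = x - (⌊x⌋ : ℝ) := rfl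
  have key := core he h0 h1
  have g1 : ⌊6 * x⌋ = ⌊6 * Int.fract x⌋ + 6 * ⌊x⌋ := by
    rw [show 6 * x = 6 * Int.fract x + ((6 * ⌊x⌋ : ℤ) : ℝ) by push_cast; rw [hfr]; ring,
      Int.floor_add_intCast]
  have g2 : ⌊-(2 * x)⌋ = ⌊-(2 * Int.fract x)⌋ + -2 * ⌊x⌋ := by
    rw [show -(2 * x) = -(2 * Int.fract x) + ((-2 * ⌊x⌋ : ℤ) : ℝ) by push_cast; rw [hfr]; ring,
      Int.floor_add_intCast]
  have g3 : ⌊-(3 * x)⌋ = ⌊-(3 * Int.fract x)⌋ + -3 * ⌊x⌋ := by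
    rw [show -(3 * x) = -(3 * Int.fract x) + ((-3 * ⌊x⌋ : ℤ) : ℝ) by push_cast; rw [hfr]; ring,
      Int.floor_add_intCast]
  have g4 : ⌊-x + 1 / 6⌋ = ⌊-Int.fract x + 1 / 6⌋ + -⌊x⌋ := by
    rw [show -x + 1 / 6 = (-Int.fract x + 1 / 6) + ((-⌊x⌋ : ℤ) : ℝ) by
      push_cast; rw [hfr]; ring, Int.floor_add_intCast]
  have g5 : ⌊-x + 5 / 6⌋ = ⌊-Int.fract x + 5 / 6⌋ + -⌊x⌋ := by
    rw [show -x + 5 / 6 = (-Int.fract x + 5 / 6) + ((-⌊x⌋ : ℤ) : ℝ) by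
      push_cast; rw [hfr]; ring, Int.floor_add_intCast]
  linarith [key, g1, g2, g3, g4, g5]

private lemma beattyCount_eq (α β : ℝ) (hα : 0 < α) (N : ℤ)
    (ha : 0 < ((N : ℝ) - β) / α) :
    (beattyCount α β N : ℤ) = ⌈((N : ℝ) + 1 - β) / α⌉ - ⌈((N : ℝ) - β) / α⌉ := by
  set a := ((N : ℝ) - β) / α with ha'
  set b := ((N : ℝ) + 1 - β) / α with hb'
  have hab : a ≤ b := by
    rw [ha', hb']
    exact div_le_div_of_nonneg_right (by linarith) hα.le
  have hca : 0 < ⌈a⌉ := Int.ceil_pos.mpr ha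
  have hcb : ⌈a⌉ ≤ ⌈b⌉ := Int.ceil_le_ceil hab
  have key : ∀ n : ℕ, (0 < n ∧ ⌊(n : ℝ) * α + β⌋ = N) ↔ n ∈ Finset.Ico ⌈a⌉.toNat ⌈b⌉.toNat := by
    intro n
    rw [Finset.mem_Ico, Int.floor_eq_iff]
    constructor
    · rintro ⟨hn, hle, hlt⟩
      constructor
      · have hr1 : a ≤ (n : ℝ) := by rw [ha', div_le_iff₀ hα]; linarith
        have hr2 : ⌈a⌉ ≤ (n : ℤ) := Int.ceil_le.mpr (by exact_mod_cast hr1)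
        omega
      · have hr1 : (n : ℝ) < b := by rw [hb', lt_div_iff₀ hα]; linarith
        have hr2 : (n : ℤ) < ⌈b⌉ := Int.lt_ceil.mpr (by exact_mod_cast hr1)
        omega
    · rintro ⟨hlo, hhi⟩
      have hr2 : ⌈a⌉ ≤ (n : ℤ) := by omega
      have hr1 : a ≤ (n : ℝ) := by exact_mod_cast Int.ceil_le.mp hr2
      have hr3 : (n : ℤ) < ⌈b⌉ := by omega
      have hr4 : (n : ℝ) < b := by exact_mod_cast Int.lt_ceil.mp hr3
      rw [ha', div_le_iff₀ hα] at hr1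
      rw [hb', lt_div_iff₀ hα] at hr4
      exact ⟨by omega, by linarith, by linarith⟩
  have hcard : beattyCount α β N = (Finset.Ico ⌈a⌉.toNat ⌈b⌉.toNat).card := by
    rw [beattyCount, Nat.card_congr (Equiv.subtypeEquivRight key), Nat.card_eq_finsetCard]
  rw [hcard, Nat.card_Ico]
  omega

private lemma count_formula {α β : ℝ} (hα : 0 < α) {N : ℤ} {u v : ℝ}
    (hu : ((N : ℝ) - β) / α = u) (hv : ((N : ℝ) + 1 - β) / α = v)
    (hu0 : 0 < u) (hiu : Irrational u) (hiv : Irrational v) :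
    (beattyCount α β N : ℤ) = ⌊v⌋ - ⌊u⌋ := by
  rw [beattyCount_eq α β hα N (by rw [hu]; exact hu0), hu, hv,
    ceil_eq_floor_add_one' hiu, ceil_eq_floor_add_one' hiv]
  ring

theorem six_sequence_irreducible_two_EEC (θ : ℝ) (hirr : Irrational θ)
    (h1 : -(1 / 6) < θ) (h2 : θ < 0) :
    ∃ N₀ : ℤ, ∀ N : ℤ, N ≥ N₀ →
      beattyCount (1 / (1 + θ)) 0 N +
      beattyCount (1 / (1 + 6 * θ)) 0 N +
      beattyCount (-(1 / (2 * θ))) 0 N +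
      beattyCount (-(1 / (3 * θ))) 0 N +
      beattyCount (-(1 / θ)) (1 / (6 * θ)) N +
      beattyCount (-(1 / θ)) (5 / (6 * θ)) N = 2 := by
  refine ⟨1, fun N hN => ?_⟩
  have hθne : θ ≠ 0 := hirr.ne_zero
  have hθ1 : (0 : ℝ) < 1 + θ := by linarith
  have hθ6 : (0 : ℝ) < 1 + 6 * θ := by linarith
  -- the key combinatorial identity
  have key : ∀ M : ℤ, M ≠ 0 →
      ⌊(M : ℝ) + (M : ℝ) * θ⌋ + ⌊(M : ℝ) + 6 * ((M : ℝ) * θ)⌋ + ⌊-(2 * ((M : ℝ) * θ))⌋ +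
      ⌊-(3 * ((M : ℝ) * θ))⌋ + ⌊-((M : ℝ) * θ) + 1 / 6⌋ + ⌊-((M : ℝ) * θ) + 5 / 6⌋
        = 2 * M - 2 := by
    intro M hM
    have hx : Irrational ((M : ℝ) * θ) := hirr.intCast_mul hM
    have h := floor_id hx
    have g1 : ⌊(M : ℝ) + (M : ℝ) * θ⌋ = M + ⌊(M : ℝ) * θ⌋ := Int.floor_intCast_add M _
    have g2 : ⌊(M : ℝ) + 6 * ((M : ℝ) * θ)⌋ = M + ⌊6 * ((M : ℝ) * θ)⌋ := Int.floor_intCast_add M _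
    linarith [h, g1, g2]
  have hNne : N ≠ 0 := by omega
  have hN1ne : N + 1 ≠ 0 := by omega
  have htN : (1 : ℝ) ≤ (N : ℝ) := by exact_mod_cast hN
  have ixN : Irrational ((N : ℝ) * θ) := hirr.intCast_mul hNne
  have ixN1 : Irrational (((N + 1 : ℤ) : ℝ) * θ) := hirr.intCast_mul hN1ne
  -- irrationality of all twelve floor arguments
  have iu1 : Irrational ((N : ℝ) + (N : ℝ) * θ) := ixN.intCast_add N
  have iv1 : Irrational (((N + 1 : ℤ) : ℝ) + ((N + 1 : ℤ) : ℝ) * θ) := ixN1.intCast_add (N + 1)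
  have iu2 : Irrational ((N : ℝ) + 6 * ((N : ℝ) * θ)) := by
    have := (hirr.intCast_mul (show 6 * N ≠ 0 by omega)).intCast_add N
    convert this using 2
    push_cast
    ring
  have iv2 : Irrational (((N + 1 : ℤ) : ℝ) + 6 * (((N + 1 : ℤ) : ℝ) * θ)) := by
    have := (hirr.intCast_mul (show 6 * (N + 1) ≠ 0 by omega)).intCast_add (N + 1)
    convert this using 2
    push_cast
    ring
  have iu3 : Irrational (-(2 * ((N : ℝ) * θ))) := by
    have := hirr.intCast_mul (show 2 * N ≠ 0 by omega) |>.neg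
    convert this using 2
    push_cast
    ring
  have iv3 : Irrational (-(2 * (((N + 1 : ℤ) : ℝ) * θ))) := by
    have := hirr.intCast_mul (show 2 * (N + 1) ≠ 0 by omega) |>.neg
    convert this using 2
    push_cast
    ring
  have iu4 : Irrational (-(3 * ((N : ℝ) * θ))) := by
    have := hirr.intCast_mul (show 3 * N ≠ 0 by omega) |>.neg
    convert this using 2
    push_cast
    ring
  have iv4 : Irrational (-(3 * (((N + 1 : ℤ) : ℝ) * θ))) := by
    have := hirr.intCast_mul (show 3 * (N + 1) ≠ 0 by omega) |>.neg
    convert this using 2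
    push_cast
    ring
  have iu5 : Irrational (-((N : ℝ) * θ) + 1 / 6) := by
    have := ixN.neg.add_ratCast (1 / 6)
    simpa using this
  have iv5 : Irrational (-(((N + 1 : ℤ) : ℝ) * θ) + 1 / 6) := by
    have := ixN1.neg.add_ratCast (1 / 6)
    simpa using this
  have iu6 : Irrational (-((N : ℝ) * θ) + 5 / 6) := by
    have := ixN.neg.add_ratCast (5 / 6)
    simpa using this
  have iv6 : Irrational (-(((N + 1 : ℤ) : ℝ) * θ) + 5 / 6) := by
    have := ixN1.neg.add_ratCast (5 / 6)
    simpa using this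
  -- positivity of lower endpoints
  have hNpos : (0 : ℝ) < (N : ℝ) := by linarith
  have hNθ : (N : ℝ) * θ < 0 := mul_neg_of_pos_of_neg hNpos h2
  have hu01 : 0 < (N : ℝ) + (N : ℝ) * θ := by nlinarith
  have hu02 : 0 < (N : ℝ) + 6 * ((N : ℝ) * θ) := by nlinarith
  have hu03 : 0 < -(2 * ((N : ℝ) * θ)) := by nlinarith
  have hu04 : 0 < -(3 * ((N : ℝ) * θ)) := by nlinarith
  have hu05 : 0 < -((N : ℝ) * θ) + 1 / 6 := by nlinarith
  have hu06 : 0 < -((N : ℝ) * θ) + 5 / 6 := by nlinarith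
  -- the six counts
  have c1 : (beattyCount (1 / (1 + θ)) 0 N : ℤ) =
      ⌊((N + 1 : ℤ) : ℝ) + ((N + 1 : ℤ) : ℝ) * θ⌋ - ⌊(N : ℝ) + (N : ℝ) * θ⌋ :=
    count_formula (by positivity)
      (by rw [sub_zero, div_one_div']; ring)
      (by rw [sub_zero, div_one_div']; push_cast; ring)
      hu01 iu1 iv1
  have c2 : (beattyCount (1 / (1 + 6 * θ)) 0 N : ℤ) =
      ⌊((N + 1 : ℤ) : ℝ) + 6 * (((N + 1 : ℤ) : ℝ) * θ)⌋ - ⌊(N : ℝ) + 6 * ((N : ℝ) * θ)⌋ :=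
    count_formula (by positivity)
      (by rw [sub_zero, div_one_div']; ring)
      (by rw [sub_zero, div_one_div']; push_cast; ring)
      hu02 iu2 iv2
  have hα3 : (0 : ℝ) < -(1 / (2 * θ)) := by
    rw [neg_pos]
    exact div_neg_of_pos_of_neg one_pos (by linarith)
  have c3 : (beattyCount (-(1 / (2 * θ))) 0 N : ℤ) =
      ⌊-(2 * (((N + 1 : ℤ) : ℝ) * θ))⌋ - ⌊-(2 * ((N : ℝ) * θ))⌋ :=
    count_formula hα3
      (by rw [sub_zero, div_neg, div_one_div']; ring)
      (by rw [sub_zero, div_neg, div_one_div']; push_cast; ring)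
      hu03 iu3 iv3
  have hα4 : (0 : ℝ) < -(1 / (3 * θ)) := by
    rw [neg_pos]
    exact div_neg_of_pos_of_neg one_pos (by linarith)
  have c4 : (beattyCount (-(1 / (3 * θ))) 0 N : ℤ) =
      ⌊-(3 * (((N + 1 : ℤ) : ℝ) * θ))⌋ - ⌊-(3 * ((N : ℝ) * θ))⌋ :=
    count_formula hα4
      (by rw [sub_zero, div_neg, div_one_div']; ring)
      (by rw [sub_zero, div_neg, div_one_div']; push_cast; ring)
      hu04 iu4 iv4
  have hα5 : (0 : ℝ) < -(1 / θ) := by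
    rw [neg_pos]
    exact div_neg_of_pos_of_neg one_pos h2
  have c5 : (beattyCount (-(1 / θ)) (1 / (6 * θ)) N : ℤ) =
      ⌊-(((N + 1 : ℤ) : ℝ) * θ) + 1 / 6⌋ - ⌊-((N : ℝ) * θ) + 1 / 6⌋ :=
    count_formula hα5
      (by rw [div_neg, div_one_div']; field_simp; ring)
      (by rw [div_neg, div_one_div']; push_cast; field_simp; ring)
      hu05 iu5 iv5
  have c6 : (beattyCount (-(1 / θ)) (5 / (6 * θ)) N : ℤ) =
      ⌊-(((N + 1 : ℤ) : ℝ) * θ) + 5 / 6⌋ - ⌊-((N : ℝ) * θ) + 5 / 6⌋ :=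
    count_formula hα5
      (by rw [div_neg, div_one_div']; field_simp; ring)
      (by rw [div_neg, div_one_div']; push_cast; field_simp; ring)
      hu06 iu6 iv6
  have keyN := key N hNne
  have keyN1 := key (N + 1) hN1ne
  have : ((beattyCount (1 / (1 + θ)) 0 N +
      beattyCount (1 / (1 + 6 * θ)) 0 N +
      beattyCount (-(1 / (2 * θ))) 0 N +
      beattyCount (-(1 / (3 * θ))) 0 N +
      beattyCount (-(1 / θ)) (1 / (6 * θ)) N +
      beattyCount (-(1 / θ)) (5 / (6 * θ)) N : ℕ) : ℤ) = 2 := by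
    push_cast
    rw [c1, c2, c3, c4, c5, c6]
    linarith [keyN, keyN1]
  exact_mod_cast this
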